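/- Let ℓ ≥ 1 be an integer and set e = 2ℓ. Let λ be a bipartition of n with removable nodes A, B, C such that res(B) ≠ res(A) and res(C) ≠ res(A) (the nodes B and C are allowed to coincide). Suppose that N_s(λ∖A) = N_{s+ℓ}(λ∖A) for all s ∈ ℤ/eℤ. Then there exists s ∈ ℤ/eℤ with N_s(λ∖B) ≠ N_{s+ℓ}(λ∖C). -/

import Mathlib

/-- A cell `a` of a Young diagram `μ` is removable if it belongs to `μ` and deleting it
again yields a Young diagram (i.e. a lower set). -/
def YoungDiagram.IsRemovable (μ : YoungDiagram) (a : ℕ × ℕ) : Prop :=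
  a ∈ μ ∧ IsLowerSet ((μ.cells.erase a : Finset (ℕ × ℕ)) : Set (ℕ × ℕ))

/-- The Young diagram obtained by removing a removable cell. -/
def YoungDiagram.eraseCell (μ : YoungDiagram) (a : ℕ × ℕ) (h : μ.IsRemovable a) :
    YoungDiagram :=
  ⟨μ.cells.erase a, h.2⟩

/-- A bipartition of `n`: an ordered pair of Young diagrams whose total number of cells
is `n`. -/
structure Bipartition (n : ℕ) where
  fst : YoungDiagram
  snd : YoungDiagram
  card_eq : fst.card + snd.card = n

namespace Bipartition

/-- The bipartition `λ^` obtained by swapping the two components. -/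
def swap {n : ℕ} (l : Bipartition n) : Bipartition n :=
  ⟨l.snd, l.fst, by have := l.card_eq; omega⟩

/-- The component of a bipartition indexed by `c : Bool`
(`false` = first component, `true` = second component). -/
def component {n : ℕ} (l : Bipartition n) (c : Bool) : YoungDiagram :=
  cond c l.snd l.fst

/-- A node `(c, i, j)` of a bipartition is removable if the corresponding cell of the
component indexed by `c` is removable. -/
def IsRemovable {n : ℕ} (l : Bipartition n) (A : Bool × ℕ × ℕ) : Prop :=
  (l.component A.1).IsRemovable A.2

/-- The bipartition of `n - 1` obtained by removing a removable node. -/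
def erase {n : ℕ} (l : Bipartition n) :
    (A : Bool × ℕ × ℕ) → l.IsRemovable A → Bipartition (n - 1)
  | (false, a), h =>
      ⟨l.fst.eraseCell a h, l.snd, by
        have hc := l.card_eq
        have ha : a ∈ l.fst.cells := h.1
        have hpos : 0 < l.fst.card := Finset.card_pos.2 ⟨a, ha⟩
        simp only [YoungDiagram.eraseCell, YoungDiagram.card,
          Finset.card_erase_of_mem ha] at *
        omega⟩
  | (true, a), h =>
      ⟨l.fst, l.snd.eraseCell a h, by
        have hc := l.card_eq
        have ha : a ∈ l.snd.cells := h.1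
        have hpos : 0 < l.snd.card := Finset.card_pos.2 ⟨a, ha⟩
        simp only [YoungDiagram.eraseCell, YoungDiagram.card,
          Finset.card_erase_of_mem ha] at *
        omega⟩

end Bipartition


/-- The residue of a node `(c, i, j)`: the class of `j - i` in `ℤ/eℤ`. -/
def nodeRes (e : ℕ) (A : Bool × ℕ × ℕ) : ZMod e :=
  (A.2.2 : ZMod e) - (A.2.1 : ZMod e)

/-- `N_s(μ)`: the number of nodes of the bipartition `μ` whose residue is `s ∈ ℤ/eℤ`. -/
def Bipartition.count {n : ℕ} (e : ℕ) (l : Bipartition n) (s : ZMod e) : ℕ :=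
  (l.fst.cells.filter fun a => ((a.2 : ZMod e) - (a.1 : ZMod e)) = s).card +
    (l.snd.cells.filter fun a => ((a.2 : ZMod e) - (a.1 : ZMod e)) = s).card


lemma count_erase_add {n e : ℕ} (l : Bipartition n) (X : Bool × ℕ × ℕ)
    (h : l.IsRemovable X) (s : ZMod e) :
    l.count e s = (l.erase X h).count e s + (if nodeRes e X = s then 1 else 0) := by
  obtain ⟨c, a⟩ := X
  have key : ∀ (t : Finset (ℕ × ℕ)), a ∈ t →
      (t.filter fun x => ((x.2 : ZMod e) - (x.1 : ZMod e)) = s).card =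
        ((t.erase a).filter fun x => ((x.2 : ZMod e) - (x.1 : ZMod e)) = s).card +
          (if ((a.2 : ZMod e) - (a.1 : ZMod e)) = s then 1 else 0) := by
    intro t ht
    rw [Finset.filter_erase]
    by_cases hp : ((a.2 : ZMod e) - (a.1 : ZMod e)) = s
    · have hmem : a ∈ t.filter fun x => ((x.2 : ZMod e) - (x.1 : ZMod e)) = s :=
        Finset.mem_filter.2 ⟨ht, hp⟩
      rw [if_pos hp, Finset.card_erase_of_mem hmem]
      have : 0 < (t.filter fun x => ((x.2 : ZMod e) - (x.1 : ZMod e)) = s).card :=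
        Finset.card_pos.2 ⟨a, hmem⟩
      omega
    · have hmem : a ∉ t.filter fun x => ((x.2 : ZMod e) - (x.1 : ZMod e)) = s := by
        simp [Finset.mem_filter, hp]
      rw [if_neg hp, Finset.erase_eq_of_notMem hmem, Nat.add_zero]
  cases c
  · have ha : a ∈ l.fst.cells := h.1
    simp only [Bipartition.erase, Bipartition.count, YoungDiagram.eraseCell, nodeRes]
    have := key l.fst.cells ha
    rw [this, add_right_comm]
    rfl
  · have ha : a ∈ l.snd.cells := h.1
    simp only [Bipartition.erase, Bipartition.count, YoungDiagram.eraseCell, nodeRes]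
    have := key l.snd.cells ha
    rw [this, add_assoc]
    rfl

/-- Let `ℓ ≥ 1`, `e = 2ℓ`, and let `λ` be a bipartition of `n` with
removable nodes `A, B, C` such that `res B ≠ res A` and `res C ≠ res A`. If
`N_s(λ∖A) = N_{s+ℓ}(λ∖A)` for all `s ∈ ℤ/eℤ`, then there exists `s ∈ ℤ/eℤ` with
`N_s(λ∖B) ≠ N_{s+ℓ}(λ∖C)`. -/
theorem stmt5 (ℓ : ℕ) (hℓ : 1 ≤ ℓ) {n : ℕ} (l : Bipartition n)
    (A B C : Bool × ℕ × ℕ)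
    (hA : l.IsRemovable A) (hB : l.IsRemovable B) (hC : l.IsRemovable C)
    (hrB : nodeRes (2 * ℓ) B ≠ nodeRes (2 * ℓ) A)
    (hrC : nodeRes (2 * ℓ) C ≠ nodeRes (2 * ℓ) A)
    (hsym : ∀ s : ZMod (2 * ℓ),
      (l.erase A hA).count (2 * ℓ) s =
        (l.erase A hA).count (2 * ℓ) (s + (ℓ : ZMod (2 * ℓ)))) :
    ∃ s : ZMod (2 * ℓ),
      (l.erase B hB).count (2 * ℓ) s ≠
        (l.erase C hC).count (2 * ℓ) (s + (ℓ : ZMod (2 * ℓ))) := by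
  set e := 2 * ℓ with he
  set a := nodeRes e A with haa
  have hAa := count_erase_add l A hA a
  have hAal := count_erase_add l A hA (a + (ℓ : ZMod e))
  have hBa := count_erase_add l B hB a
  have hCal := count_erase_add l C hC (a + (ℓ : ZMod e))
  have hla : a ≠ a + (ℓ : ZMod e) := by
    intro hcon
    have h0 : (ℓ : ZMod e) = 0 := by rwa [left_eq_add] at hcon
    rw [ZMod.natCast_eq_zero_iff] at h0
    have := Nat.le_of_dvd hℓ h0
    omega
  have hs := hsym a
  refine ⟨a, ?_⟩
  rw [← haa] at hAa hAal
  rw [if_pos rfl] at hAa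
  rw [if_neg hla] at hAal
  rw [if_neg hrB] at hBa
  split_ifs at hCal <;> omega
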